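/- For every positive integer ν there exists a constant c_ν > 0 such that for all N ≥ 2 and all T > 0, c_ν·(log N)^{ν²} ≤ (1/(2T)) ∫_{-T}^{T} |∑_{n=1}^N n^{-1/2 - i t}|^{2ν} dt. -/

import Mathlib

noncomputable section
namespace Stmt9
open Finset
open scoped Classical

def lam (Q : ℕ) : ℝ := ∑ p ∈ Q.primeFactors, (p:ℝ)⁻¹

def rough (P M : ℕ) : Finset ℕ :=
  (Finset.Icc 1 M).filter (fun n => ∀ p : ℕ, p.Prime → p ∣ n → P < p)

def Aval (P M : ℕ) : ℝ := ∑ n ∈ rough P M, (n:ℝ)⁻¹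

lemma lam_nonneg (Q : ℕ) : 0 ≤ lam Q := Finset.sum_nonneg fun p _ => by positivity

lemma one_mem_rough {P M : ℕ} (hM : 1 ≤ M) : 1 ∈ rough P M := by
  simp only [rough, mem_filter, Finset.mem_Icc]
  refine ⟨⟨le_refl 1, hM⟩, fun p hp hpd => ?_⟩
  exact absurd (Nat.eq_one_of_dvd_one hpd) hp.ne_one

lemma mem_rough {P M n : ℕ} (hn : n ∈ rough P M) :
    1 ≤ n ∧ n ≤ M ∧ ∀ p : ℕ, p.Prime → p ∣ n → P < p := by
  simp only [rough, mem_filter, Finset.mem_Icc] at hn; tauto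

lemma pos_of_mem_rough {P M n : ℕ} (hn : n ∈ rough P M) : 0 < n := (mem_rough hn).1

lemma one_le_Aval {P M : ℕ} (hM : 1 ≤ M) : 1 ≤ Aval P M := by
  have := Finset.single_le_sum (f := fun n : ℕ => (n:ℝ)⁻¹)
    (fun n hn => by positivity) (one_mem_rough (P := P) hM)
  simpa [Aval] using this

lemma Aval_nonneg (P M : ℕ) : 0 ≤ Aval P M :=
  Finset.sum_nonneg fun n _ => by positivity

/-- Sum over rough numbers divisible by p is at most A/p. -/
lemma sum_rough_dvd_le {P M p : ℕ} (hp : p.Prime) :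
    ∑ v ∈ (rough P M).filter (fun v => p ∣ v), (v:ℝ)⁻¹ ≤ (p:ℝ)⁻¹ * Aval P M := by
  classical
  set s := (rough P M).filter (fun v => p ∣ v) with hs
  have hinj : Set.InjOn (fun v => v / p) s := by
    intro a ha b hb hab
    simp only [hs, coe_filter, Set.mem_setOf_eq] at ha hb
    obtain ⟨ca, hca⟩ := ha.2; obtain ⟨cb, hcb⟩ := hb.2
    simp only [hca, hcb, Nat.mul_div_cancel_left _ hp.pos] at hab ⊢
    rw [hab]
  have himg : s.image (fun v => v / p) ⊆ rough P M := by
    intro b hb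
    simp only [Finset.mem_image] at hb
    obtain ⟨v, hv, rfl⟩ := hb
    rw [hs, mem_filter] at hv
    obtain ⟨hv1, hv2, hv3⟩ := mem_rough hv.1
    have hdvd := hv.2
    simp only [rough, mem_filter, Finset.mem_Icc]
    refine ⟨⟨?_, ?_⟩, ?_⟩
    · exact Nat.one_le_div_iff hp.pos |>.mpr (Nat.le_of_dvd (by omega) hdvd)
    · exact le_trans (Nat.div_le_self _ _) hv2
    · intro q hq hqd
      exact hv3 q hq (hqd.trans (Nat.div_dvd_of_dvd hdvd))
  have key : ∑ v ∈ s, (v:ℝ)⁻¹ = ∑ b ∈ s.image (fun v => v / p), ((p:ℝ) * (b:ℝ))⁻¹ := by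
    rw [Finset.sum_image (fun a ha b hb => hinj ha hb)]
    refine Finset.sum_congr rfl fun v hv => ?_
    rw [hs, mem_filter] at hv
    have : (p * (v / p) : ℕ) = v := Nat.mul_div_cancel' hv.2
    rw [← Nat.cast_mul, this]
  rw [key]
  calc ∑ b ∈ s.image (fun v => v / p), ((p:ℝ) * (b:ℝ))⁻¹
      ≤ ∑ b ∈ rough P M, ((p:ℝ) * (b:ℝ))⁻¹ :=
        Finset.sum_le_sum_of_subset_of_nonneg himg (fun b _ _ => by positivity)
    _ = (p:ℝ)⁻¹ * Aval P M := by
        rw [Aval, Finset.mul_sum]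
        exact Finset.sum_congr rfl fun b _ => by rw [mul_inv]

/-- Union bound over prime divisors. -/
lemma sum_le_sum_primes {t u : Finset ℕ} {f : ℕ → ℝ} (hf : ∀ v ∈ t, 0 ≤ f v)
    (hcov : ∀ v ∈ t, ∃ p ∈ u, p ∣ v) :
    ∑ v ∈ t, f v ≤ ∑ p ∈ u, ∑ v ∈ t.filter (fun v => p ∣ v), f v := by
  classical
  have : ∀ p, ∑ v ∈ t.filter (fun v => p ∣ v), f v
      = ∑ v ∈ t, if p ∣ v then f v else 0 := fun p => Finset.sum_filter _ _
  simp_rw [this]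
  rw [Finset.sum_comm]
  refine Finset.sum_le_sum fun v hv => ?_
  obtain ⟨p, hp, hpd⟩ := hcov v hv
  calc f v = ∑ q ∈ {p}, if q ∣ v then f v else 0 := by simp [hpd]
    _ ≤ _ := Finset.sum_le_sum_of_subset_of_nonneg
        (Finset.singleton_subset_iff.mpr hp)
        (fun q _ _ => by by_cases h : q ∣ v <;> simp [h, hf v hv])

/-- Lower bound for coprime-restricted sum. -/
lemma coprime_sum_lower {P M Q : ℕ} (hQ : 0 < Q) :
    Aval P M * (1 - lam Q) ≤
      ∑ v ∈ (rough P M).filter (fun v => Nat.Coprime v Q), (v:ℝ)⁻¹ := by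
  classical
  have hsplit : Aval P M = (∑ v ∈ (rough P M).filter (fun v => Nat.Coprime v Q), (v:ℝ)⁻¹)
      + ∑ v ∈ (rough P M).filter (fun v => ¬ Nat.Coprime v Q), (v:ℝ)⁻¹ := by
    rw [Aval, ← Finset.sum_filter_add_sum_filter_not (rough P M) (fun v => Nat.Coprime v Q)]
  have hbad : ∑ v ∈ (rough P M).filter (fun v => ¬ Nat.Coprime v Q), (v:ℝ)⁻¹
      ≤ lam Q * Aval P M := by
    have hcov : ∀ v ∈ (rough P M).filter (fun v => ¬ Nat.Coprime v Q),
        ∃ p ∈ Q.primeFactors, p ∣ v := by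
      intro v hv
      rw [Finset.mem_filter] at hv
      obtain ⟨p, hp, hpv, hpQ⟩ := Nat.Prime.not_coprime_iff_dvd.mp hv.2
      exact ⟨p, Nat.mem_primeFactors.mpr ⟨hp, hpQ, hQ.ne'⟩, hpv⟩
    calc ∑ v ∈ (rough P M).filter (fun v => ¬ Nat.Coprime v Q), (v:ℝ)⁻¹
        ≤ ∑ p ∈ Q.primeFactors, ∑ v ∈ ((rough P M).filter (fun v => ¬ Nat.Coprime v Q)).filter
            (fun v => p ∣ v), (v:ℝ)⁻¹ :=
          sum_le_sum_primes (fun v _ => by positivity) hcov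
      _ ≤ ∑ p ∈ Q.primeFactors, ∑ v ∈ (rough P M).filter (fun v => p ∣ v), (v:ℝ)⁻¹ := by
          refine Finset.sum_le_sum fun p hp => ?_
          refine Finset.sum_le_sum_of_subset_of_nonneg ?_ (fun v _ _ => by positivity)
          intro v hv
          rw [Finset.mem_filter] at hv ⊢
          rw [Finset.mem_filter] at hv
          exact ⟨hv.1.1, hv.2⟩
      _ ≤ ∑ p ∈ Q.primeFactors, (p:ℝ)⁻¹ * Aval P M := by
          refine Finset.sum_le_sum fun p hp => ?_
          exact sum_rough_dvd_le (Nat.prime_of_mem_primeFactors hp)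
      _ = lam Q * Aval P M := by rw [lam, Finset.sum_mul]
  nlinarith [hsplit, hbad]

/-- Telescoping: sum of 1/n^2 over (P, M] is at most 1/P. -/
lemma sum_inv_sq_le {P : ℕ} (hP : 0 < P) (M : ℕ) :
    ∑ n ∈ Finset.Icc (P+1) M, ((n:ℝ) * (n:ℝ))⁻¹ ≤ (P:ℝ)⁻¹ := by
  rcases le_or_gt M P with h | h
  · rw [Finset.Icc_eq_empty (by omega), Finset.sum_empty]
    positivity
  · have key : ∀ m : ℕ, P ≤ m →
        ∑ n ∈ Finset.Icc (P+1) m, ((n:ℝ) * (n:ℝ))⁻¹ ≤ (P:ℝ)⁻¹ - (m:ℝ)⁻¹ := by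
      intro m hm
      induction m, hm using Nat.le_induction with
      | base => rw [Finset.Icc_eq_empty (by omega)]; simp
      | succ m hm ih =>
        rw [Finset.sum_Icc_succ_top (by omega)]
        have hm0 : (0:ℝ) < (m:ℝ) := by exact_mod_cast hP.trans_le hm
        have hm1 : (0:ℝ) < ((m:ℝ)+1) := by linarith
        have hcast : ((m+1 : ℕ):ℝ) = (m:ℝ)+1 := by push_cast; ring
        rw [hcast]
        have hstep : (((m:ℝ)+1) * ((m:ℝ)+1))⁻¹ ≤ (m:ℝ)⁻¹ - ((m:ℝ)+1)⁻¹ := by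
          rw [inv_sub_inv hm0.ne' hm1.ne']
          rw [div_eq_mul_inv]
          have h1 : (m:ℝ)+1-(m:ℝ) = 1 := by ring
          rw [h1, one_mul]
          apply inv_anti₀ (by positivity)
          nlinarith
        linarith
    have := key M h.le
    have hM0 : (0:ℝ) < (M:ℝ) := by exact_mod_cast (hP.trans h)
    linarith [inv_pos.mpr hM0]

/-- The lambda-weighted sum is small: B ≤ A/P. -/
lemma lam_weighted_sum_le {P M : ℕ} (hP : 0 < P) :
    ∑ v ∈ rough P M, (v:ℝ)⁻¹ * lam v ≤ (P:ℝ)⁻¹ * Aval P M := by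
  classical
  set PP := (Finset.Icc (P+1) M).filter Nat.Prime with hPP
  have hexp : ∀ v ∈ rough P M, (v:ℝ)⁻¹ * lam v
      = ∑ p ∈ PP, if p ∣ v then (p:ℝ)⁻¹ * (v:ℝ)⁻¹ else 0 := by
    intro v hv
    obtain ⟨hv1, hv2, hv3⟩ := mem_rough hv
    rw [lam, Finset.mul_sum, ← Finset.sum_filter]
    refine Finset.sum_congr ?_ (fun p _ => by ring)
    ext p
    simp only [Nat.mem_primeFactors, hPP, Finset.mem_filter, Finset.mem_Icc]
    constructor
    · rintro ⟨hp, hpv, -⟩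
      have h1 := hv3 p hp hpv
      have h2 := (Nat.le_of_dvd (by omega) hpv).trans hv2
      exact ⟨⟨⟨by omega, h2⟩, hp⟩, hpv⟩
    · rintro ⟨⟨-, hp⟩, hpv⟩
      exact ⟨hp, hpv, by omega⟩
  rw [Finset.sum_congr rfl hexp, Finset.sum_comm]
  have hinner : ∀ p ∈ PP, ∑ v ∈ rough P M, (if p ∣ v then (p:ℝ)⁻¹ * (v:ℝ)⁻¹ else 0)
      ≤ (p:ℝ)⁻¹ * ((p:ℝ)⁻¹ * Aval P M) := by
    intro p hp
    rw [hPP, Finset.mem_filter] at hp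
    rw [← Finset.sum_filter]
    calc ∑ v ∈ (rough P M).filter (fun v => p ∣ v), (p:ℝ)⁻¹ * (v:ℝ)⁻¹
        = (p:ℝ)⁻¹ * ∑ v ∈ (rough P M).filter (fun v => p ∣ v), (v:ℝ)⁻¹ := by
          rw [Finset.mul_sum]
      _ ≤ (p:ℝ)⁻¹ * ((p:ℝ)⁻¹ * Aval P M) := by
          refine mul_le_mul_of_nonneg_left ?_ (by positivity)
          exact sum_rough_dvd_le hp.2
  calc ∑ p ∈ PP, ∑ v ∈ rough P M, (if p ∣ v then (p:ℝ)⁻¹ * (v:ℝ)⁻¹ else 0)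
      ≤ ∑ p ∈ PP, (p:ℝ)⁻¹ * ((p:ℝ)⁻¹ * Aval P M) := Finset.sum_le_sum hinner
    _ ≤ ∑ p ∈ Finset.Icc (P+1) M, ((p:ℝ) * (p:ℝ))⁻¹ * Aval P M := by
        refine Finset.sum_le_sum_of_subset_of_nonneg (Finset.filter_subset _ _) ?_ |>.trans ?_
        · intro p _ _
          have : (0:ℝ) ≤ Aval P M := Aval_nonneg P M
          positivity
        · refine le_of_eq (Finset.sum_congr rfl fun p _ => ?_)
          rw [mul_inv]; ring
    _ = (∑ p ∈ Finset.Icc (P+1) M, ((p:ℝ) * (p:ℝ))⁻¹) * Aval P M := by rw [Finset.sum_mul]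
    _ ≤ (P:ℝ)⁻¹ * Aval P M :=
        mul_le_mul_of_nonneg_right (sum_inv_sq_le hP M) (Aval_nonneg P M)

variable {ι : Type*} [Fintype ι] [DecidableEq ι]

def tset (P M : ℕ) (s : Finset ι) (Q : ℕ) : Finset (ι → ℕ) :=
  (Fintype.piFinset fun _ => rough P M).filter
    (fun a => (∀ x, x ∉ s → a x = 1) ∧
      (∀ x ∈ s, ∀ y ∈ s, x ≠ y → Nat.Coprime (a x) (a y)) ∧
      (∀ x ∈ s, Nat.Coprime (a x) Q))

def tsum (P M : ℕ) (s : Finset ι) (Q : ℕ) : ℝ :=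
  ∑ a ∈ tset P M s Q, ∏ x ∈ s, ((a x : ℝ))⁻¹

lemma tsum_nonneg (P M : ℕ) (s : Finset ι) (Q : ℕ) : 0 ≤ tsum P M s Q :=
  Finset.sum_nonneg fun a _ => Finset.prod_nonneg fun x _ => by positivity

lemma tsum_empty (P M : ℕ) (hM : 1 ≤ M) (Q : ℕ) : tsum P M (∅ : Finset ι) Q = 1 := by
  classical
  have : tset P M (∅ : Finset ι) Q = {fun _ => 1} := by
    ext a
    simp only [tset, Finset.mem_filter, Fintype.mem_piFinset, Finset.mem_singleton]
    constructor
    · rintro ⟨-, h1, -, -⟩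
      funext x
      exact h1 x (Finset.notMem_empty x)
    · rintro rfl
      exact ⟨fun x => one_mem_rough hM, fun x _ => rfl,
        fun x hx => absurd hx (Finset.notMem_empty x), fun x hx => absurd hx (Finset.notMem_empty x)⟩
  rw [tsum, this]
  simp

lemma tsum_insert (P M : ℕ) (hM : 1 ≤ M) {s : Finset ι} {x : ι} (hx : x ∉ s) (Q : ℕ) :
    tsum P M (insert x s) Q
      = ∑ v ∈ (rough P M).filter (fun v => Nat.Coprime v Q),
          (v:ℝ)⁻¹ * tsum P M s (Q * v) := by
  classical
  have hrhs : ∑ v ∈ (rough P M).filter (fun v => Nat.Coprime v Q),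
      (v:ℝ)⁻¹ * tsum P M s (Q * v)
      = ∑ p ∈ ((rough P M).filter (fun v => Nat.Coprime v Q)).sigma
          (fun v => tset P M s (Q * v)),
          (p.1:ℝ)⁻¹ * ∏ y ∈ s, ((p.2 y : ℝ))⁻¹ := by
    rw [Finset.sum_sigma]
    exact Finset.sum_congr rfl fun v _ => by rw [tsum, Finset.mul_sum]
  rw [hrhs, tsum]
  refine Finset.sum_nbij' (i := fun a => ⟨a x, Function.update a x 1⟩)
    (j := fun p => Function.update p.2 x p.1) ?_ ?_ ?_ ?_ ?_
  · -- forward membership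
    intro a ha
    simp only [tset, Finset.mem_filter, Fintype.mem_piFinset] at ha
    obtain ⟨hpi, hone, hpw, hcop⟩ := ha
    simp only [Finset.mem_sigma, Finset.mem_filter, tset, Fintype.mem_piFinset]
    refine ⟨⟨hpi x, hcop x (Finset.mem_insert_self x s)⟩, ?_, ?_, ?_, ?_⟩
    · intro y
      rcases eq_or_ne y x with rfl | hyx
      · simpa using one_mem_rough hM
      · simpa [Function.update_of_ne hyx] using hpi y
    · intro y hy
      rcases eq_or_ne y x with rfl | hyx
      · simp
      · rw [Function.update_of_ne hyx]
        exact hone y (by simp [hy, hyx])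
    · intro y hy z hz hyz
      have hyx : y ≠ x := fun h => hx (h ▸ hy)
      have hzx : z ≠ x := fun h => hx (h ▸ hz)
      rw [Function.update_of_ne hyx, Function.update_of_ne hzx]
      exact hpw y (Finset.mem_insert_of_mem hy) z (Finset.mem_insert_of_mem hz) hyz
    · intro y hy
      have hyx : y ≠ x := fun h => hx (h ▸ hy)
      rw [Function.update_of_ne hyx]
      refine Nat.Coprime.mul_right (hcop y (Finset.mem_insert_of_mem hy)) ?_
      exact hpw y (Finset.mem_insert_of_mem hy) x (Finset.mem_insert_self x s) hyx
  · -- backward membership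
    rintro ⟨v, b⟩ hp
    simp only [Finset.mem_sigma, Finset.mem_filter, tset, Fintype.mem_piFinset] at hp
    obtain ⟨⟨hv, hvQ⟩, hbpi, hbone, hbpw, hbcop⟩ := hp
    simp only [tset, Finset.mem_filter, Fintype.mem_piFinset]
    refine ⟨?_, ?_, ?_, ?_⟩
    · intro y
      rcases eq_or_ne y x with rfl | hyx
      · simpa using hv
      · simpa [Function.update_of_ne hyx] using hbpi y
    · intro y hy
      have hyx : y ≠ x := fun h => hy (h ▸ Finset.mem_insert_self x s)
      rw [Function.update_of_ne hyx]
      exact hbone y (fun hys => hy (Finset.mem_insert_of_mem hys))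
    · intro y hy z hz hyz
      rcases Finset.mem_insert.mp hy with rfl | hys
      · rcases Finset.mem_insert.mp hz with rfl | hzs
        · exact absurd rfl hyz
        · have hzx : z ≠ y := fun h => hx (h ▸ hzs)
          rw [Function.update_self, Function.update_of_ne hzx]
          exact ((hbcop z hzs).coprime_dvd_right (dvd_mul_left v Q)).symm
      · rcases Finset.mem_insert.mp hz with rfl | hzs
        · have hyz' : y ≠ z := fun h => hx (h ▸ hys)
          rw [Function.update_self, Function.update_of_ne hyz']
          exact (hbcop y hys).coprime_dvd_right (dvd_mul_left v Q)
        · have hyx : y ≠ x := fun h => hx (h ▸ hys)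
          have hzx : z ≠ x := fun h => hx (h ▸ hzs)
          rw [Function.update_of_ne hyx, Function.update_of_ne hzx]
          exact hbpw y hys z hzs hyz
    · intro y hy
      rcases Finset.mem_insert.mp hy with rfl | hys
      · rw [Function.update_self]; exact hvQ
      · have hyx : y ≠ x := fun h => hx (h ▸ hys)
        rw [Function.update_of_ne hyx]
        exact (hbcop y hys).coprime_dvd_right (dvd_mul_right Q v)
  · -- left inverse
    intro a ha
    simp only
    funext y
    rcases eq_or_ne y x with rfl | hyx
    · rw [Function.update_self]
    · rw [Function.update_of_ne hyx, Function.update_of_ne hyx]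
  · -- right inverse
    rintro ⟨v, b⟩ hp
    simp only [Finset.mem_sigma, Finset.mem_filter, tset, Fintype.mem_piFinset] at hp
    obtain ⟨⟨hv, hvQ⟩, hbpi, hbone, hbpw, hbcop⟩ := hp
    have hbx : b x = 1 := hbone x hx
    have hupd : Function.update (Function.update b x v) x 1 = b := by
      funext y
      rcases eq_or_ne y x with rfl | hyx
      · rw [Function.update_self, hbx]
      · rw [Function.update_of_ne hyx, Function.update_of_ne hyx]
    simp [hupd]
  · -- weights agree
    intro a ha
    simp only [tset, Finset.mem_filter, Fintype.mem_piFinset] at ha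
    rw [Finset.prod_insert hx]
    congr 1
    refine Finset.prod_congr rfl fun y hy => ?_
    have hyx : y ≠ x := fun h => hx (h ▸ hy)
    simp [Function.update_of_ne hyx]

lemma lam_one : lam 1 = 0 := by simp [lam]

lemma lam_mul_le {Q v : ℕ} (hQ : Q ≠ 0) (hv : v ≠ 0) : lam (Q*v) ≤ lam Q + lam v := by
  rw [lam, lam, lam, Nat.primeFactors_mul hQ hv]
  have := Finset.sum_union_inter (s₁ := Q.primeFactors) (s₂ := v.primeFactors)
    (f := fun p => (p:ℝ)⁻¹)
  have hnn : 0 ≤ ∑ p ∈ Q.primeFactors ∩ v.primeFactors, (p:ℝ)⁻¹ :=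
    Finset.sum_nonneg fun p _ => by positivity
  linarith

lemma tsum_ge (P M : ℕ) (hP : 0 < P) (hM : 1 ≤ M) (s : Finset ι) :
    ∀ Q : ℕ, 0 < Q →
    Aval P M ^ s.card * (1 - s.card * lam Q - (s.card:ℝ)^2 * (P:ℝ)⁻¹) ≤ tsum P M s Q := by
  classical
  induction s using Finset.induction_on with
  | empty =>
    intro Q hQ
    rw [tsum_empty P M hM Q]
    simp
  | insert x s hx ih =>
    intro Q hQ
    set A := Aval P M with hA
    set β := (P:ℝ)⁻¹ with hβ
    set L := lam Q with hL
    have hA0 : 0 ≤ A := Aval_nonneg P M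
    have hβ0 : 0 ≤ β := by positivity
    have hL0 : 0 ≤ L := lam_nonneg Q
    set j := s.card with hj
    have hcard : (insert x s).card = j + 1 := Finset.card_insert_of_notMem hx
    rw [hcard, tsum_insert P M hM hx Q]
    by_cases hC : 0 ≤ 1 - (j:ℝ)*L - (j:ℝ)^2*β
    · -- main case
      have hterm : ∀ v ∈ (rough P M).filter (fun v => Nat.Coprime v Q),
          (v:ℝ)⁻¹ * (A^j * (1 - j*L - j*lam v - (j:ℝ)^2*β))
            ≤ (v:ℝ)⁻¹ * tsum P M s (Q * v) := by
        intro v hv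
        rw [Finset.mem_filter] at hv
        have hv1 : 0 < v := pos_of_mem_rough hv.1
        have hQv : 0 < Q * v := Nat.mul_pos hQ hv1
        have hlam := lam_mul_le hQ.ne' hv1.ne'
        have h1 := ih (Q * v) hQv
        refine mul_le_mul_of_nonneg_left (le_trans ?_ h1) (by positivity)
        refine mul_le_mul_of_nonneg_left ?_ (pow_nonneg hA0 j)
        have : (j:ℝ) * lam (Q*v) ≤ (j:ℝ)*L + (j:ℝ)*lam v := by
          rw [← mul_add]
          exact mul_le_mul_of_nonneg_left hlam (Nat.cast_nonneg j)
        linarith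
      have hsum : ∑ v ∈ (rough P M).filter (fun v => Nat.Coprime v Q),
          (v:ℝ)⁻¹ * (A^j * (1 - j*L - j*lam v - (j:ℝ)^2*β))
          = A^j * ((1 - (j:ℝ)*L - (j:ℝ)^2*β)
              * (∑ v ∈ (rough P M).filter (fun v => Nat.Coprime v Q), (v:ℝ)⁻¹)
            - (j:ℝ) * ∑ v ∈ (rough P M).filter (fun v => Nat.Coprime v Q), (v:ℝ)⁻¹ * lam v) := by
        simp only [Finset.mul_sum, ← Finset.sum_sub_distrib]
        exact Finset.sum_congr rfl fun v hv => by ring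
      have hS1 : A * (1 - L) ≤ ∑ v ∈ (rough P M).filter (fun v => Nat.Coprime v Q), (v:ℝ)⁻¹ :=
        coprime_sum_lower hQ
      have hSlam : ∑ v ∈ (rough P M).filter (fun v => Nat.Coprime v Q), (v:ℝ)⁻¹ * lam v
          ≤ β * A := by
        calc ∑ v ∈ (rough P M).filter (fun v => Nat.Coprime v Q), (v:ℝ)⁻¹ * lam v
            ≤ ∑ v ∈ rough P M, (v:ℝ)⁻¹ * lam v := by
              refine Finset.sum_le_sum_of_subset_of_nonneg (Finset.filter_subset _ _) ?_
              intro v hv _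
              have := lam_nonneg v
              positivity
          _ ≤ β * A := lam_weighted_sum_le hP
      push_cast
      calc A ^ (j+1) * (1 - ((j:ℝ)+1) * L - ((j:ℝ)+1)^2 * β)
          ≤ A ^ (j+1) * ((1 - (j:ℝ)*L - (j:ℝ)^2*β) * (1 - L) - (j:ℝ)*β) := by
            refine mul_le_mul_of_nonneg_left ?_ (pow_nonneg hA0 _)
            nlinarith [mul_nonneg (mul_nonneg (Nat.cast_nonneg (α := ℝ) j) hL0) hL0,
              mul_nonneg (mul_nonneg (mul_nonneg (Nat.cast_nonneg (α := ℝ) j)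
                (Nat.cast_nonneg (α := ℝ) j)) hβ0) hL0,
              mul_nonneg (Nat.cast_nonneg (α := ℝ) j) hβ0, hβ0, hL0]
        _ = A^j * ((1 - (j:ℝ)*L - (j:ℝ)^2*β) * (A * (1 - L)) - (j:ℝ) * (β * A)) := by
            rw [pow_succ]; ring
        _ ≤ A^j * ((1 - (j:ℝ)*L - (j:ℝ)^2*β)
              * (∑ v ∈ (rough P M).filter (fun v => Nat.Coprime v Q), (v:ℝ)⁻¹)
            - (j:ℝ) * ∑ v ∈ (rough P M).filter (fun v => Nat.Coprime v Q), (v:ℝ)⁻¹ * lam v) := by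
            refine mul_le_mul_of_nonneg_left ?_ (pow_nonneg hA0 j)
            have h1 := mul_le_mul_of_nonneg_left hS1 hC
            have h2 := mul_le_mul_of_nonneg_left hSlam (Nat.cast_nonneg (α := ℝ) j)
            linarith
        _ = ∑ v ∈ (rough P M).filter (fun v => Nat.Coprime v Q),
              (v:ℝ)⁻¹ * (A^j * (1 - j*L - j*lam v - (j:ℝ)^2*β)) := hsum.symm
        _ ≤ _ := Finset.sum_le_sum hterm
    · -- degenerate case: coefficient negative
      push_neg at hC
      have hrhs : 0 ≤ ∑ v ∈ (rough P M).filter (fun v => Nat.Coprime v Q),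
          (v:ℝ)⁻¹ * tsum P M s (Q * v) :=
        Finset.sum_nonneg fun v hv => mul_nonneg (by positivity) (tsum_nonneg P M s _)
      refine le_trans ?_ hrhs
      have hcoeff : 1 - ((j:ℝ)+1) * L - ((j:ℝ)+1)^2 * β ≤ 0 := by
        nlinarith [Nat.cast_nonneg (α := ℝ) j]
      push_cast
      exact mul_nonpos_of_nonneg_of_nonpos (pow_nonneg hA0 _) (by push_cast at hcoeff ⊢; linarith)

lemma pwc_sum_ge (P M : ℕ) (hP : 0 < P) (hM : 1 ≤ M) :
    Aval P M ^ (Fintype.card ι) * (1 - (Fintype.card ι : ℝ)^2 * (P:ℝ)⁻¹)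
      ≤ ∑ a ∈ tset P M (Finset.univ : Finset ι) 1, ∏ x, ((a x : ℝ))⁻¹ := by
  have := tsum_ge P M hP hM (Finset.univ : Finset ι) 1 one_pos
  simpa [tsum, lam_one, Finset.card_univ] using this

lemma kQ_mem_rough {P M k : ℕ} (hk : 1 ≤ k) (hkM : k * Nat.factorial P + 1 ≤ M) :
    k * Nat.factorial P + 1 ∈ rough P M := by
  simp only [rough, Finset.mem_filter, Finset.mem_Icc]
  refine ⟨⟨by omega, hkM⟩, fun p hp hpd => ?_⟩
  by_contra hle
  push_neg at hle
  have h1 : p ∣ Nat.factorial P := Nat.dvd_factorial hp.pos hle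
  have h2 : p ∣ k * Nat.factorial P := h1.mul_left k
  have h3 : p ∣ 1 := (Nat.dvd_add_right h2).mp hpd
  exact hp.ne_one (Nat.eq_one_of_dvd_one h3)

lemma log_le_Aval (P M : ℕ) (hP : 0 < P) (hM : 1 ≤ M) :
    Real.log (M+1) ≤ (2*(Nat.factorial P : ℝ) + Real.log (Nat.factorial P) + Real.log 2) * Aval P M := by
  set Q0 := Nat.factorial P with hQ0def
  have hQ0 : 1 ≤ Q0 := Nat.one_le_iff_ne_zero.mpr (Nat.factorial_ne_zero P)
  have hQ0R : (1:ℝ) ≤ (Q0:ℝ) := by exact_mod_cast hQ0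
  set K := (M-1) / Q0 with hK
  -- A ≥ (log M - log Q0) / (2 Q0)
  have hsum1 : ∑ k ∈ Finset.Icc 1 K, ((k * Q0 + 1 : ℕ) : ℝ)⁻¹ ≤ Aval P M := by
    have himg : (Finset.Icc 1 K).image (fun k => k * Q0 + 1) ⊆ rough P M := by
      intro n hn
      simp only [Finset.mem_image, Finset.mem_Icc] at hn
      obtain ⟨k, ⟨hk1, hk2⟩, rfl⟩ := hn
      refine kQ_mem_rough hk1 ?_
      have h1 : k * Q0 ≤ M - 1 := by
        calc k * Q0 ≤ K * Q0 := Nat.mul_le_mul_right _ hk2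
          _ ≤ M - 1 := Nat.div_mul_le_self _ _
      simp only [← hQ0def]
      omega
    have hinj : ∀ a ∈ Finset.Icc 1 K, ∀ b ∈ Finset.Icc 1 K,
        a * Q0 + 1 = b * Q0 + 1 → a = b := by
      intro a _ b _ h
      have := Nat.eq_of_mul_eq_mul_right (by omega : 0 < Q0) (by omega : a * Q0 = b * Q0)
      exact this
    calc ∑ k ∈ Finset.Icc 1 K, ((k * Q0 + 1 : ℕ) : ℝ)⁻¹
        = ∑ n ∈ (Finset.Icc 1 K).image (fun k => k * Q0 + 1), ((n:ℕ):ℝ)⁻¹ := by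
          rw [Finset.sum_image hinj]
      _ ≤ Aval P M := Finset.sum_le_sum_of_subset_of_nonneg himg (fun n _ _ => by positivity)
  have hsum2 : (2 * (Q0:ℝ))⁻¹ * ∑ k ∈ Finset.Icc 1 K, ((k:ℕ):ℝ)⁻¹
      ≤ ∑ k ∈ Finset.Icc 1 K, ((k * Q0 + 1 : ℕ) : ℝ)⁻¹ := by
    rw [Finset.mul_sum]
    refine Finset.sum_le_sum fun k hk => ?_
    rw [Finset.mem_Icc] at hk
    have hk1 : (1:ℝ) ≤ (k:ℝ) := by exact_mod_cast hk.1
    rw [← mul_inv]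
    apply inv_anti₀ (by positivity)
    push_cast
    nlinarith
  have hharm : Real.log ((K:ℝ)+1) ≤ ∑ k ∈ Finset.Icc 1 K, ((k:ℕ):ℝ)⁻¹ := by
    have h1 := log_add_one_le_harmonic K
    have h2 : (harmonic K : ℝ) = ∑ k ∈ Finset.Icc 1 K, ((k:ℕ):ℝ)⁻¹ := by
      rw [harmonic_eq_sum_Icc]
      push_cast
      rfl
    rw [h2] at h1
    exact_mod_cast h1
  have hMpos : (0:ℝ) < (M:ℝ) := by exact_mod_cast hM
  have hKM : (M:ℝ) ≤ ((K:ℝ)+1) * (Q0:ℝ) := by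
    have hdm := Nat.div_add_mod (M-1) Q0
    have hmod := Nat.mod_lt (M-1) (show 0 < Q0 by omega)
    have hexp : (K+1) * Q0 = K * Q0 + Q0 := by rw [add_mul, one_mul]
    have hthis : Q0 * K + (M-1) % Q0 = M - 1 := hdm
    rw [mul_comm] at hthis
    have : M ≤ (K+1) * Q0 := by omega
    exact_mod_cast this
  have hlogK : Real.log M - Real.log Q0 ≤ Real.log ((K:ℝ)+1) := by
    have h1 : Real.log M ≤ Real.log (((K:ℝ)+1) * Q0) :=
      Real.log_le_log hMpos hKM
    rw [Real.log_mul (by positivity) (by positivity)] at h1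
    linarith
  have hAval1 : (1:ℝ) ≤ Aval P M := one_le_Aval hM
  have hAval2 : (2 * (Q0:ℝ))⁻¹ * (Real.log M - Real.log Q0) ≤ Aval P M := by
    calc (2 * (Q0:ℝ))⁻¹ * (Real.log M - Real.log Q0)
        ≤ (2 * (Q0:ℝ))⁻¹ * Real.log ((K:ℝ)+1) :=
          mul_le_mul_of_nonneg_left hlogK (by positivity)
      _ ≤ (2 * (Q0:ℝ))⁻¹ * ∑ k ∈ Finset.Icc 1 K, ((k:ℕ):ℝ)⁻¹ :=
          mul_le_mul_of_nonneg_left hharm (by positivity)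
      _ ≤ ∑ k ∈ Finset.Icc 1 K, ((k * Q0 + 1 : ℕ) : ℝ)⁻¹ := hsum2
      _ ≤ Aval P M := hsum1
  have hlog2 : Real.log ((M:ℝ)+1) ≤ Real.log 2 + Real.log M := by
    have hM1 : (1:ℝ) ≤ (M:ℝ) := by exact_mod_cast hM
    have : ((M:ℝ)+1) ≤ 2 * M := by linarith
    calc Real.log ((M:ℝ)+1) ≤ Real.log (2*M) := Real.log_le_log (by positivity) this
      _ = Real.log 2 + Real.log M := Real.log_mul two_ne_zero hMpos.ne'
  have hlogQ0 : 0 ≤ Real.log (Q0:ℝ) := Real.log_nonneg hQ0R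
  have hlogM : Real.log (M:ℝ) ≤ Real.log Q0 + 2 * (Q0:ℝ) * Aval P M := by
    have h := mul_le_mul_of_nonneg_left hAval2 (by positivity : (0:ℝ) ≤ 2 * (Q0:ℝ))
    rw [← mul_assoc, mul_inv_cancel₀ (by positivity), one_mul] at h
    linarith
  push_cast
  calc Real.log ((M:ℝ)+1) ≤ Real.log 2 + Real.log Q0 + 2 * (Q0:ℝ) * Aval P M := by linarith
    _ ≤ (Real.log 2 + Real.log Q0) * Aval P M + 2 * (Q0:ℝ) * Aval P M := by
        nlinarith [hAval1, Real.log_nonneg (by norm_num : (1:ℝ) ≤ 2), hlogQ0]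
    _ = (2*((Q0:ℕ):ℝ) + Real.log ((Q0:ℕ):ℝ) + Real.log 2) * Aval P M := by ring

section Fejer
open intervalIntegral

lemma fejer_integrable {T : ℝ} (θ : ℝ) (a b : ℝ) :
    IntervalIntegrable (fun t => (1 - |t|/T) * Real.cos (θ * t)) MeasureTheory.volume a b := by
  apply Continuous.intervalIntegrable
  have h1 : Continuous fun t : ℝ => 1 - |t|/T := by continuity
  have h2 : Continuous fun t : ℝ => Real.cos (θ * t) := by continuity
  exact h1.mul h2

lemma fejer_right {T : ℝ} (hT : 0 < T) (θ : ℝ) (hθ : θ ≠ 0) :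
    ∫ t in (0:ℝ)..T, (1 - |t|/T) * Real.cos (θ * t)
      = (1 - Real.cos (θ * T)) / (T * θ^2) := by
  have hcong : ∫ t in (0:ℝ)..T, (1 - |t|/T) * Real.cos (θ * t)
      = ∫ t in (0:ℝ)..T, (1 - t/T) * Real.cos (θ * t) := by
    refine intervalIntegral.integral_congr fun t ht => ?_
    rw [Set.uIcc_of_le hT.le] at ht
    rw [abs_of_nonneg ht.1]
  rw [hcong]
  have hderiv : ∀ t ∈ Set.uIcc (0:ℝ) T,
      HasDerivAt (fun t => (1 - t/T) * (Real.sin (θ * t)/θ) - Real.cos (θ * t)/(T*θ^2))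
        ((1 - t/T) * Real.cos (θ * t)) t := by
    intro t ht
    have h1 : HasDerivAt (fun t : ℝ => θ * t) θ t := by
      simpa using (hasDerivAt_id t).const_mul θ
    have hsin : HasDerivAt (fun t : ℝ => Real.sin (θ * t)) (Real.cos (θ * t) * θ) t :=
      (Real.hasDerivAt_sin (θ * t)).comp t h1
    have hcos : HasDerivAt (fun t : ℝ => Real.cos (θ * t)) (-Real.sin (θ * t) * θ) t :=
      (Real.hasDerivAt_cos (θ * t)).comp t h1
    have hlin : HasDerivAt (fun t : ℝ => 1 - t/T) (-(1/T)) t := by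
      simpa using ((hasDerivAt_id t).div_const T).const_sub 1
    have := (hlin.mul (hsin.div_const θ)).sub (hcos.div_const (T*θ^2))
    refine this.congr_deriv ?_
    field_simp
    ring
  have hint : IntervalIntegrable (fun t => (1 - t/T) * Real.cos (θ * t))
      MeasureTheory.volume 0 T := by
    apply Continuous.intervalIntegrable
    have h1 : Continuous fun t : ℝ => 1 - t/T := by continuity
    exact h1.mul (by continuity)
  rw [intervalIntegral.integral_eq_sub_of_hasDerivAt hderiv hint]
  field_simp
  rw [mul_zero, Real.sin_zero, Real.cos_zero]
  ring

lemma fejer_left {T : ℝ} (hT : 0 < T) (θ : ℝ) (hθ : θ ≠ 0) :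
    ∫ t in (-T)..(0:ℝ), (1 - |t|/T) * Real.cos (θ * t)
      = (1 - Real.cos (θ * T)) / (T * θ^2) := by
  have hcong : ∫ t in (-T)..(0:ℝ), (1 - |t|/T) * Real.cos (θ * t)
      = ∫ t in (-T)..(0:ℝ), (1 + t/T) * Real.cos (θ * t) := by
    refine intervalIntegral.integral_congr fun t ht => ?_
    rw [Set.uIcc_of_le (by linarith : -T ≤ (0:ℝ))] at ht
    rw [abs_of_nonpos ht.2]
    ring_nf
  rw [hcong]
  have hderiv : ∀ t ∈ Set.uIcc (-T) (0:ℝ),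
      HasDerivAt (fun t => (1 + t/T) * (Real.sin (θ * t)/θ) + Real.cos (θ * t)/(T*θ^2))
        ((1 + t/T) * Real.cos (θ * t)) t := by
    intro t ht
    have h1 : HasDerivAt (fun t : ℝ => θ * t) θ t := by
      simpa using (hasDerivAt_id t).const_mul θ
    have hsin : HasDerivAt (fun t : ℝ => Real.sin (θ * t)) (Real.cos (θ * t) * θ) t :=
      (Real.hasDerivAt_sin (θ * t)).comp t h1
    have hcos : HasDerivAt (fun t : ℝ => Real.cos (θ * t)) (-Real.sin (θ * t) * θ) t :=
      (Real.hasDerivAt_cos (θ * t)).comp t h1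
    have hlin : HasDerivAt (fun t : ℝ => 1 + t/T) (1/T) t := by
      simpa using ((hasDerivAt_id t).div_const T).const_add 1
    have := (hlin.mul (hsin.div_const θ)).add (hcos.div_const (T*θ^2))
    refine this.congr_deriv ?_
    field_simp
    ring
  have hint : IntervalIntegrable (fun t => (1 + t/T) * Real.cos (θ * t))
      MeasureTheory.volume (-T) 0 := by
    apply Continuous.intervalIntegrable
    have h1 : Continuous fun t : ℝ => 1 + t/T := by continuity
    exact h1.mul (by continuity)
  rw [intervalIntegral.integral_eq_sub_of_hasDerivAt hderiv hint]
  have hc : Real.cos (θ * -T) = Real.cos (θ * T) := by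
    rw [show θ * -T = -(θ*T) by ring, Real.cos_neg]
  simp [hc]
  field_simp
  ring

lemma fejer_eval {T : ℝ} (hT : 0 < T) (θ : ℝ) (hθ : θ ≠ 0) :
    ∫ t in (-T)..T, (1 - |t|/T) * Real.cos (θ * t)
      = 2 * (1 - Real.cos (θ * T)) / (T * θ^2) := by
  rw [← intervalIntegral.integral_add_adjacent_intervals
    (fejer_integrable θ (-T) 0) (fejer_integrable θ 0 T),
    fejer_left hT θ hθ, fejer_right hT θ hθ]
  ring

lemma fejer_zero_eval {T : ℝ} (hT : 0 < T) :
    ∫ t in (-T)..T, (1 - |t|/T) * Real.cos (0 * t) = T := by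
  have hcong : ∀ t : ℝ, (1 - |t|/T) * Real.cos (0 * t) = 1 - |t|/T := by
    intro t; simp
  simp_rw [hcong]
  have hi1 : IntervalIntegrable (fun t : ℝ => 1 - |t|/T) MeasureTheory.volume (-T) 0 := by
    apply Continuous.intervalIntegrable; continuity
  have hi2 : IntervalIntegrable (fun t : ℝ => 1 - |t|/T) MeasureTheory.volume 0 T := by
    apply Continuous.intervalIntegrable; continuity
  rw [← intervalIntegral.integral_add_adjacent_intervals hi1 hi2]
  have hright : ∫ t in (0:ℝ)..T, (1 - |t|/T) = T/2 := by
    have hcong2 : ∫ t in (0:ℝ)..T, (1 - |t|/T) = ∫ t in (0:ℝ)..T, (1 - t/T) := by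
      refine intervalIntegral.integral_congr fun t ht => ?_
      rw [Set.uIcc_of_le hT.le] at ht
      rw [abs_of_nonneg ht.1]
    rw [hcong2]
    have hderiv : ∀ t ∈ Set.uIcc (0:ℝ) T,
        HasDerivAt (fun t : ℝ => t - t^2/(2*T)) (1 - t/T) t := by
      intro t ht
      have h1 := ((hasDerivAt_pow 2 t).div_const (2*T)).const_sub 0
      have h2 := (hasDerivAt_id t).sub (((hasDerivAt_pow 2 t)).div_const (2*T))
      refine h2.congr_deriv ?_
      field_simp
      ring
    rw [intervalIntegral.integral_eq_sub_of_hasDerivAt hderiv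
      (by apply Continuous.intervalIntegrable; continuity)]
    field_simp
    ring
  have hleft : ∫ t in (-T)..(0:ℝ), (1 - |t|/T) = T/2 := by
    have hcong2 : ∫ t in (-T)..(0:ℝ), (1 - |t|/T) = ∫ t in (-T)..(0:ℝ), (1 + t/T) := by
      refine intervalIntegral.integral_congr fun t ht => ?_
      rw [Set.uIcc_of_le (by linarith : -T ≤ (0:ℝ))] at ht
      rw [abs_of_nonpos ht.2]
      ring_nf
    rw [hcong2]
    have hderiv : ∀ t ∈ Set.uIcc (-T) (0:ℝ),
        HasDerivAt (fun t : ℝ => t + t^2/(2*T)) (1 + t/T) t := by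
      intro t ht
      have h2 := (hasDerivAt_id t).add (((hasDerivAt_pow 2 t)).div_const (2*T))
      refine h2.congr_deriv ?_
      field_simp
      ring
    rw [intervalIntegral.integral_eq_sub_of_hasDerivAt hderiv
      (by apply Continuous.intervalIntegrable; continuity)]
    field_simp
    ring
  rw [hleft, hright]
  ring

lemma fejer_nonneg {T : ℝ} (hT : 0 < T) (θ : ℝ) :
    0 ≤ ∫ t in (-T)..T, (1 - |t|/T) * Real.cos (θ * t) := by
  rcases eq_or_ne θ 0 with rfl | hθ
  · rw [fejer_zero_eval hT]; exact hT.le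
  · rw [fejer_eval hT θ hθ]
    have h1 : Real.cos (θ * T) ≤ 1 := Real.cos_le_one _
    have h2 : (0:ℝ) < T * θ^2 := by positivity
    exact div_nonneg (by linarith) h2.le

end Fejer

section Expand
open Complex Finset

def wre (n : ℕ) : ℝ := Real.exp (-Real.log n / 2)

lemma wre_pos (n : ℕ) : 0 < wre n := Real.exp_pos _

def Wt {k : ℕ} (Pt : Fin k → ℕ) : ℝ := ∏ i, wre (Pt i)

def Lt {k : ℕ} (Pt : Fin k → ℕ) : ℝ := ∑ i, Real.log (Pt i)

lemma Wt_pos {k : ℕ} (Pt : Fin k → ℕ) : 0 < Wt Pt :=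
  Finset.prod_pos fun i _ => wre_pos _

lemma cpow_eq (n : ℕ) (hn : 1 ≤ n) (t : ℝ) :
    (n:ℂ) ^ (-(1/2 : ℂ) - Complex.I * t)
      = (wre n : ℂ) * Complex.exp (-(t * Real.log n) * Complex.I) := by
  have hn0 : (n:ℂ) ≠ 0 := Nat.cast_ne_zero.mpr (by omega)
  rw [Complex.cpow_def_of_ne_zero hn0]
  have hlog : Complex.log (n:ℂ) = ((Real.log n : ℝ) : ℂ) := by
    rw [show (n:ℂ) = ((n:ℝ):ℂ) by push_cast; rfl]
    exact (Complex.ofReal_log (Nat.cast_nonneg n)).symm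
  rw [hlog]
  rw [show ((Real.log n : ℝ) : ℂ) * (-(1/2 : ℂ) - Complex.I * t)
      = ((-Real.log n / 2 : ℝ) : ℂ) + (-(t * Real.log n) * Complex.I) by
    push_cast; ring]
  rw [Complex.exp_add, wre, Complex.ofReal_exp]

lemma pow_expand (N : ℕ) (hN : 1 ≤ N) (k : ℕ) (t : ℝ) :
    (∑ n ∈ Finset.Icc 1 N, (n:ℂ) ^ (-(1/2 : ℂ) - Complex.I * t)) ^ k
      = ∑ Pt ∈ Fintype.piFinset (fun _ : Fin k => Finset.Icc 1 N),
          (Wt Pt : ℂ) * Complex.exp (-(t * Lt Pt) * Complex.I) := by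
  have hterm : ∀ n ∈ Finset.Icc 1 N, (n:ℂ) ^ (-(1/2 : ℂ) - Complex.I * t)
      = (wre n : ℂ) * Complex.exp (-(t * Real.log n) * Complex.I) := by
    intro n hn
    rw [Finset.mem_Icc] at hn
    exact cpow_eq n hn.1 t
  rw [Finset.sum_congr rfl hterm]
  rw [show (∑ n ∈ Finset.Icc 1 N, (wre n : ℂ) * Complex.exp (-(t * Real.log n) * Complex.I)) ^ k
      = ∏ _i : Fin k, ∑ n ∈ Finset.Icc 1 N,
          (wre n : ℂ) * Complex.exp (-(t * Real.log n) * Complex.I) by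
    rw [Finset.prod_const, Finset.card_univ, Fintype.card_fin]]
  rw [Finset.prod_univ_sum]
  refine Finset.sum_congr rfl fun Pt _ => ?_
  rw [Finset.prod_mul_distrib, ← Complex.exp_sum]
  congr 1
  · rw [Wt]; push_cast; rfl
  · rw [Lt]
    push_cast
    rw [← Finset.sum_mul]
    congr 1
    rw [Finset.sum_neg_distrib, ← Finset.mul_sum]

lemma conj_term (W L t : ℝ) :
    (starRingEnd ℂ) ((W : ℂ) * Complex.exp (-(t * L) * Complex.I))
      = (W : ℂ) * Complex.exp ((t * L) * Complex.I) := by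
  rw [map_mul, Complex.conj_ofReal, ← Complex.exp_conj]
  congr 2
  rw [map_mul, map_neg, Complex.conj_I]
  rw [show (starRingEnd ℂ) ((t:ℂ) * (L:ℂ)) = (t:ℂ) * (L:ℂ) by
    rw [map_mul, Complex.conj_ofReal, Complex.conj_ofReal]]
  ring

lemma norm_expand (N : ℕ) (hN : 1 ≤ N) (k : ℕ) (t : ℝ) :
    ‖∑ n ∈ Finset.Icc 1 N, (n:ℂ) ^ (-(1/2 : ℂ) - Complex.I * t)‖ ^ (2*k)
      = ∑ p ∈ (Fintype.piFinset (fun _ : Fin k => Finset.Icc 1 N)) ×ˢ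
          (Fintype.piFinset (fun _ : Fin k => Finset.Icc 1 N)),
          (Wt p.1 * Wt p.2) * Real.cos ((Lt p.2 - Lt p.1) * t) := by
  set S := ∑ n ∈ Finset.Icc 1 N, (n:ℂ) ^ (-(1/2 : ℂ) - Complex.I * t) with hS
  have h1 : ‖S‖ ^ (2*k) = (S^k * (starRingEnd ℂ) (S^k)).re := by
    rw [Complex.mul_conj, Complex.ofReal_re, Complex.normSq_eq_norm_sq,
      norm_pow, ← pow_mul, mul_comm k 2]
  rw [h1, hS, pow_expand N hN k t, map_sum]
  rw [Finset.sum_congr rfl (fun Q _ => conj_term (Wt Q) (Lt Q) t)]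
  rw [Finset.sum_mul_sum]
  rw [Finset.sum_product]
  rw [Complex.re_sum]
  refine Finset.sum_congr rfl fun P _ => ?_
  rw [Complex.re_sum]
  refine Finset.sum_congr rfl fun Q _ => ?_
  rw [mul_mul_mul_comm, ← Complex.exp_add, ← Complex.ofReal_mul]
  have harg : (-(↑t * ↑(Lt P)) * Complex.I + ↑t * ↑(Lt Q) * Complex.I)
      = ((((Lt Q - Lt P) * t : ℝ)) : ℂ) * Complex.I := by push_cast; ring
  rw [harg, Complex.re_ofReal_mul, Complex.exp_ofReal_mul_I_re]

end Expand

section Inject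
open Finset

variable {ν : ℕ}

def rows (a : Fin ν × Fin ν → ℕ) : Fin ν → ℕ := fun i => ∏ j, a (i, j)
def cols (a : Fin ν × Fin ν → ℕ) : Fin ν → ℕ := fun j => ∏ i, a (i, j)

lemma log_nat_prod (s : Finset (Fin ν)) (f : Fin ν → ℕ) (hf : ∀ i ∈ s, f i ≠ 0) :
    Real.log (((∏ i ∈ s, f i : ℕ)) : ℝ) = ∑ i ∈ s, Real.log (f i) := by
  rw [Nat.cast_prod]
  exact Real.log_prod (s := s) (f := fun i => (f i : ℝ)) (fun i hi => Nat.cast_ne_zero.mpr (hf i hi))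

lemma gcd_recover (a : Fin ν × Fin ν → ℕ)
    (hcop : ∀ x y : Fin ν × Fin ν, x ≠ y → Nat.Coprime (a x) (a y)) (i j : Fin ν) :
    Nat.gcd (rows a i) (cols a j) = a (i, j) := by
  have hrow : rows a i = a (i, j) * ∏ j' ∈ Finset.univ.erase j, a (i, j') :=
    (Finset.mul_prod_erase Finset.univ (fun j' => a (i, j')) (Finset.mem_univ j)).symm
  have hcol : cols a j = a (i, j) * ∏ i' ∈ Finset.univ.erase i, a (i', j) :=
    (Finset.mul_prod_erase Finset.univ (fun i' => a (i', j)) (Finset.mem_univ i)).symm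
  rw [hrow, hcol, Nat.gcd_mul_left]
  have hcopRC : Nat.Coprime (∏ j' ∈ Finset.univ.erase j, a (i, j'))
      (∏ i' ∈ Finset.univ.erase i, a (i', j)) := by
    apply Nat.Coprime.prod_left
    intro j' hj'
    apply Nat.Coprime.prod_right
    intro i' hi'
    refine hcop (i, j') (i', j) ?_
    intro h
    rw [Finset.mem_erase] at hj'
    exact hj'.1 (congrArg Prod.snd h)
  rw [hcopRC, mul_one]

lemma tset_cop {P M : ℕ} {a : Fin ν × Fin ν → ℕ}
    (ha : a ∈ tset P M (Finset.univ : Finset (Fin ν × Fin ν)) 1) :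
    ∀ x y : Fin ν × Fin ν, x ≠ y → Nat.Coprime (a x) (a y) := by
  simp only [tset, Finset.mem_filter] at ha
  intro x y hxy
  exact ha.2.2.1 x (Finset.mem_univ x) y (Finset.mem_univ y) hxy

lemma tset_pos {P M : ℕ} {a : Fin ν × Fin ν → ℕ}
    (ha : a ∈ tset P M (Finset.univ : Finset (Fin ν × Fin ν)) 1) :
    ∀ x, 0 < a x ∧ a x ≤ M := by
  simp only [tset, Finset.mem_filter, Fintype.mem_piFinset] at ha
  intro x
  obtain ⟨h1, h2, h3⟩ := mem_rough (ha.1 x)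
  omega

lemma rows_cols_inj {P M : ℕ} :
    Set.InjOn (fun a => (rows a, cols a))
      (↑(tset P M (Finset.univ : Finset (Fin ν × Fin ν)) 1) :
        Set (Fin ν × Fin ν → ℕ)) := by
  intro a ha b hb hab
  rw [Finset.mem_coe] at ha hb
  simp only [Prod.mk.injEq] at hab
  funext x
  have h1 := gcd_recover a (tset_cop ha) x.1 x.2
  have h2 := gcd_recover b (tset_cop hb) x.1 x.2
  rw [← Prod.mk.eta (p := x), ← h1, ← h2, hab.1, hab.2]

lemma Lt_rows_eq_cols {a : Fin ν × Fin ν → ℕ} (hpos : ∀ x, 0 < a x) :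
    Lt (rows a) = Lt (cols a) := by
  rw [Lt, Lt]
  have h1 : ∀ i : Fin ν, Real.log ((rows a i : ℕ) : ℝ) = ∑ j, Real.log (a (i, j)) := by
    intro i
    simp only [rows]
    exact log_nat_prod Finset.univ _ (fun j _ => (hpos (i, j)).ne')
  have h2 : ∀ j : Fin ν, Real.log ((cols a j : ℕ) : ℝ) = ∑ i, Real.log (a (i, j)) := by
    intro j
    simp only [cols]
    exact log_nat_prod Finset.univ _ (fun i _ => (hpos (i, j)).ne')
  simp_rw [h1, h2]
  exact Finset.sum_comm

lemma Wt_eq_exp {g : Fin ν → ℕ} : Wt g = Real.exp (∑ i, -(Real.log (g i) / 2)) := by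
  rw [Wt, Real.exp_sum]
  refine Finset.prod_congr rfl fun i _ => ?_
  rw [wre]
  congr 1
  ring

lemma Wt_rows_mul_cols {a : Fin ν × Fin ν → ℕ} (hpos : ∀ x, 0 < a x) :
    Wt (rows a) * Wt (cols a) = ∏ x : Fin ν × Fin ν, ((a x : ℝ))⁻¹ := by
  rw [Wt_eq_exp, Wt_eq_exp, ← Real.exp_add]
  have h1 : ∑ i : Fin ν, -(Real.log (rows a i) / 2)
      = -(∑ x : Fin ν × Fin ν, Real.log (a x)) / 2 := by
    have : ∀ i : Fin ν, -(Real.log ((rows a i : ℕ) : ℝ) / 2)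
        = -((∑ j, Real.log (a (i, j))) / 2) := by
      intro i
      simp only [rows]
      rw [log_nat_prod Finset.univ _ (fun j _ => (hpos (i, j)).ne')]
    simp_rw [this]
    have hs : (∑ i : Fin ν, ∑ j : Fin ν, Real.log (a (i,j)))
        = ∑ x : Fin ν × Fin ν, Real.log (a x) := (Fintype.sum_prod_type (fun x : Fin ν × Fin ν => Real.log (a x))).symm
    rw [Finset.sum_neg_distrib, ← Finset.sum_div, hs, neg_div]
  have h2 : ∑ j : Fin ν, -(Real.log (cols a j) / 2)
      = -(∑ x : Fin ν × Fin ν, Real.log (a x)) / 2 := by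
    have : ∀ j : Fin ν, -(Real.log ((cols a j : ℕ) : ℝ) / 2)
        = -((∑ i, Real.log (a (i, j))) / 2) := by
      intro j
      simp only [cols]
      rw [log_nat_prod Finset.univ _ (fun i _ => (hpos (i, j)).ne')]
    simp_rw [this]
    have hs : (∑ j : Fin ν, ∑ i : Fin ν, Real.log (a (i,j)))
        = ∑ x : Fin ν × Fin ν, Real.log (a x) := by
      rw [Fintype.sum_prod_type]
      exact Finset.sum_comm
    rw [Finset.sum_neg_distrib, ← Finset.sum_div, hs, neg_div]
  rw [h1, h2]
  rw [show -(∑ x : Fin ν × Fin ν, Real.log (a x)) / 2 + -(∑ x : Fin ν × Fin ν, Real.log (a x)) / 2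
      = ∑ x : Fin ν × Fin ν, -Real.log (a x) by rw [Finset.sum_neg_distrib]; ring]
  rw [Real.exp_sum]
  refine Finset.prod_congr rfl fun x _ => ?_
  rw [Real.exp_neg, Real.exp_log (by exact_mod_cast hpos x)]

end Inject

end Stmt9

open MeasureTheory Complex

theorem stmt_9 (ν : ℕ) (hν : 0 < ν) :
    ∃ c : ℝ, 0 < c ∧ ∀ (N : ℕ), 2 ≤ N → ∀ T : ℝ, 0 < T →
      c * (Real.log N) ^ (ν ^ 2) ≤
        (1 / (2 * T)) *
          ∫ t in (-T)..T,
            ‖∑ n ∈ Finset.Icc 1 N, (n : ℂ) ^ (-(1 / 2 : ℂ) - Complex.I * t)‖ ^ (2 * ν) := by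
  classical
  open Stmt9 in
  set r : ℕ := ν * ν with hr
  have hr1 : 1 ≤ r := Nat.one_le_iff_ne_zero.mpr (by positivity)
  set P0 : ℕ := 2 * r * r with hP0
  have hP0pos : 0 < P0 := by positivity
  set C1 : ℝ := 2 * (Nat.factorial P0 : ℝ) + Real.log (Nat.factorial P0) + Real.log 2 with hC1
  have hfac1 : (1:ℝ) ≤ (Nat.factorial P0 : ℝ) := by
    exact_mod_cast Nat.one_le_iff_ne_zero.mpr (Nat.factorial_ne_zero P0)
  have hC1pos : (0:ℝ) < C1 := by
    have h1 : 0 ≤ Real.log (Nat.factorial P0) := Real.log_nonneg hfac1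
    have h2 : 0 ≤ Real.log 2 := Real.log_nonneg (by norm_num)
    rw [hC1]; nlinarith
  have hνC1 : (0:ℝ) < (ν:ℝ) * C1 := by
    have : (0:ℝ) < (ν:ℝ) := by exact_mod_cast hν
    positivity
  refine ⟨(1/4) * (((ν:ℝ) * C1) ^ r)⁻¹, by positivity, ?_⟩
  intro N hN T hT
  -- set up M
  set M : ℕ := ⌊(N:ℝ) ^ ((ν:ℝ)⁻¹)⌋₊ with hM
  have hNR : (1:ℝ) ≤ (N:ℝ) := by exact_mod_cast le_trans one_le_two hN
  have hνR : (0:ℝ) < (ν:ℝ) := by exact_mod_cast hν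
  have hrpow_pos : (0:ℝ) < (N:ℝ) ^ ((ν:ℝ)⁻¹) := Real.rpow_pos_of_pos (by linarith) _
  have hM1 : 1 ≤ M := by
    rw [hM]
    refine Nat.le_floor ?_
    push_cast
    exact Real.one_le_rpow hNR (by positivity)
  have hMle : ((M:ℝ)) ^ (ν:ℕ) ≤ (N:ℝ) := by
    have h1 : (M:ℝ) ≤ (N:ℝ) ^ ((ν:ℝ)⁻¹) := Nat.floor_le (le_of_lt hrpow_pos)
    calc ((M:ℝ)) ^ (ν:ℕ) ≤ ((N:ℝ) ^ ((ν:ℝ)⁻¹)) ^ (ν:ℕ) :=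
          pow_le_pow_left₀ (Nat.cast_nonneg M) h1 ν
      _ = (N:ℝ) := by
          rw [← Real.rpow_natCast ((N:ℝ) ^ ((ν:ℝ)⁻¹)) ν, ← Real.rpow_mul (by linarith)]
          rw [inv_mul_cancel₀ (by positivity : ((ν:ℝ)) ≠ 0), Real.rpow_one]
  have hMN : M ^ ν ≤ N := by
    have := hMle
    have h2 : ((M ^ ν : ℕ) : ℝ) ≤ (N:ℝ) := by push_cast; exact this
    exact_mod_cast h2
  have hNle : (N:ℝ) ≤ ((M:ℝ) + 1) ^ (ν:ℕ) := by
    have h1 : (N:ℝ) ^ ((ν:ℝ)⁻¹) < (M:ℝ) + 1 := Nat.lt_floor_add_one _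
    calc (N:ℝ) = ((N:ℝ) ^ ((ν:ℝ)⁻¹)) ^ (ν:ℕ) := by
          rw [← Real.rpow_natCast ((N:ℝ) ^ ((ν:ℝ)⁻¹)) ν, ← Real.rpow_mul (by linarith)]
          rw [inv_mul_cancel₀ (by positivity : ((ν:ℝ)) ≠ 0), Real.rpow_one]
      _ ≤ ((M:ℝ) + 1) ^ (ν:ℕ) := pow_le_pow_left₀ (le_of_lt hrpow_pos) h1.le ν
  -- index sets
  set pi := Fintype.piFinset (fun _ : Fin ν => Finset.Icc 1 N) with hpi
  set AA := tset P0 M (Finset.univ : Finset (Fin ν × Fin ν)) 1 with hAA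
  set E := AA.image (fun a => (rows a, cols a)) with hE
  have hEsub : E ⊆ pi ×ˢ pi := by
    intro p hp
    rw [hE, Finset.mem_image] at hp
    obtain ⟨a, ha, rfl⟩ := hp
    have hpos := tset_pos ha
    have hrow : ∀ i, rows a i ∈ Finset.Icc 1 N := by
      intro i
      rw [Finset.mem_Icc]
      constructor
      · exact Finset.prod_pos fun j _ => (hpos (i, j)).1
      · calc rows a i ≤ ∏ _j : Fin ν, M :=
              Finset.prod_le_prod' fun j _ => (hpos (i, j)).2
          _ = M ^ ν := by rw [Finset.prod_const, Finset.card_univ, Fintype.card_fin]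
          _ ≤ N := hMN
    have hcol : ∀ j, cols a j ∈ Finset.Icc 1 N := by
      intro j
      rw [Finset.mem_Icc]
      constructor
      · exact Finset.prod_pos fun i _ => (hpos (i, j)).1
      · calc cols a j ≤ ∏ _i : Fin ν, M :=
              Finset.prod_le_prod' fun i _ => (hpos (i, j)).2
          _ = M ^ ν := by rw [Finset.prod_const, Finset.card_univ, Fintype.card_fin]
          _ ≤ N := hMN
    rw [Finset.mem_product]
    exact ⟨Fintype.mem_piFinset.mpr hrow, Fintype.mem_piFinset.mpr hcol⟩
  -- the expanded integrand
  set g : ℝ → ℝ := fun t => ∑ p ∈ pi ×ˢ pi,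
      (Wt p.1 * Wt p.2) * Real.cos ((Lt p.2 - Lt p.1) * t) with hg
  have hgeq : ∀ t : ℝ,
      ‖∑ n ∈ Finset.Icc 1 N, (n : ℂ) ^ (-(1 / 2 : ℂ) - Complex.I * t)‖ ^ (2 * ν) = g t :=
    fun t => norm_expand N (le_trans one_le_two hN) ν t
  have hgcont : Continuous g := by
    rw [hg]
    refine continuous_finset_sum _ fun p _ => ?_
    exact (continuous_const.mul (Real.continuous_cos.comp (continuous_const.mul continuous_id)))
  have hgnonneg : ∀ t, 0 ≤ g t := by
    intro t
    rw [← hgeq t]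
    positivity
  -- step 1: insert Fejér weight
  have hstep1 : ∫ t in (-T)..T, (1 - |t|/T) * g t ≤ ∫ t in (-T)..T, g t := by
    refine intervalIntegral.integral_mono_on (by linarith) ?_ ?_ ?_
    · exact ((continuous_const.sub (((show Continuous fun t : ℝ => |t| from _root_.continuous_abs).div_const T))).mul hgcont).intervalIntegrable _ _
    · exact hgcont.intervalIntegrable _ _
    · intro t ht
      refine mul_le_of_le_one_left (hgnonneg t) ?_
      have h1 : 0 ≤ |t| := abs_nonneg t
      have h2 : 0 < T := hT
      have : 0 ≤ |t| / T := by positivity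
      linarith
  -- step 2: interchange
  have hstep2 : ∫ t in (-T)..T, (1 - |t|/T) * g t
      = ∑ p ∈ pi ×ˢ pi, (Wt p.1 * Wt p.2) *
          ∫ t in (-T)..T, (1 - |t|/T) * Real.cos ((Lt p.2 - Lt p.1) * t) := by
    have hw : ∀ t : ℝ, (1 - |t|/T) * g t = ∑ p ∈ pi ×ˢ pi,
        (Wt p.1 * Wt p.2) * ((1 - |t|/T) * Real.cos ((Lt p.2 - Lt p.1) * t)) := by
      intro t
      rw [hg, Finset.mul_sum]
      exact Finset.sum_congr rfl fun p _ => by ring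
    simp_rw [hw]
    rw [intervalIntegral.integral_finset_sum]
    · exact Finset.sum_congr rfl fun p _ => intervalIntegral.integral_const_mul _ _
    · intro p _
      exact (fejer_integrable _ _ _).const_mul _
  -- step 3: drop to diagonal subset E
  have hstep3 : ∑ p ∈ E, (Wt p.1 * Wt p.2) *
        ∫ t in (-T)..T, (1 - |t|/T) * Real.cos ((Lt p.2 - Lt p.1) * t)
      ≤ ∑ p ∈ pi ×ˢ pi, (Wt p.1 * Wt p.2) *
        ∫ t in (-T)..T, (1 - |t|/T) * Real.cos ((Lt p.2 - Lt p.1) * t) := by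
    refine Finset.sum_le_sum_of_subset_of_nonneg hEsub fun p _ _ => ?_
    exact mul_nonneg (mul_nonneg (Wt_pos p.1).le (Wt_pos p.2).le) (fejer_nonneg hT _)
  -- step 4: evaluate on E
  set U : ℝ := ∑ a ∈ AA, ∏ x : Fin ν × Fin ν, ((a x : ℝ))⁻¹ with hU
  have hstep4 : ∑ p ∈ E, (Wt p.1 * Wt p.2) *
        ∫ t in (-T)..T, (1 - |t|/T) * Real.cos ((Lt p.2 - Lt p.1) * t) = T * U := by
    rw [hE, Finset.sum_image (fun a ha b hb h => rows_cols_inj ha hb h), hU,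
      Finset.mul_sum]
    refine Finset.sum_congr rfl fun a ha => ?_
    have hpos : ∀ x, 0 < a x := fun x => (tset_pos ha x).1
    have hL : Lt (cols a) - Lt (rows a) = 0 := by
      rw [Lt_rows_eq_cols hpos]; ring
    have hcos : ∀ t : ℝ, Real.cos ((Lt (cols a) - Lt (rows a)) * t) = Real.cos (0 * t) := by
      intro t; rw [hL]
    simp only
    simp_rw [hcos]
    rw [fejer_zero_eval hT, Wt_rows_mul_cols hpos]
    ring
  -- step 5: lower bound U
  have hcard : Fintype.card (Fin ν × Fin ν) = r := by
    rw [Fintype.card_prod, Fintype.card_fin, hr]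
  have hhalf : (1:ℝ) - (r:ℝ)^2 * ((P0:ℝ))⁻¹ = 1/2 := by
    rw [hP0]
    push_cast
    have hrR : (0:ℝ) < (r:ℝ) := by exact_mod_cast hr1
    field_simp
    ring
  have hstep5 : Aval P0 M ^ r * (1/2) ≤ U := by
    have := pwc_sum_ge (ι := Fin ν × Fin ν) P0 M hP0pos hM1
    rw [hcard, hhalf] at this
    exact this
  -- step 6: Aval lower bound via logs
  have hlogA : Real.log N ≤ (ν:ℝ) * C1 * Aval P0 M := by
    have h1 : Real.log N ≤ (ν:ℝ) * Real.log ((M:ℝ)+1) := by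
      calc Real.log N ≤ Real.log (((M:ℝ)+1) ^ (ν:ℕ)) :=
            Real.log_le_log (by linarith) hNle
        _ = (ν:ℝ) * Real.log ((M:ℝ)+1) := by rw [Real.log_pow]
    have h2 := log_le_Aval P0 M hP0pos hM1
    calc Real.log N ≤ (ν:ℝ) * Real.log ((M:ℝ)+1) := h1
      _ ≤ (ν:ℝ) * (C1 * Aval P0 M) := by
          refine mul_le_mul_of_nonneg_left ?_ (Nat.cast_nonneg ν)
          rw [hC1]
          exact_mod_cast h2
      _ = (ν:ℝ) * C1 * Aval P0 M := by ring
  have hA1 : (1:ℝ) ≤ Aval P0 M := one_le_Aval hM1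
  have hApow : (Real.log N / ((ν:ℝ) * C1)) ^ r ≤ Aval P0 M ^ r := by
    refine pow_le_pow_left₀ ?_ ?_ r
    · exact div_nonneg (Real.log_nonneg hNR) hνC1.le
    · rw [div_le_iff₀ hνC1]
      calc Real.log N ≤ (ν:ℝ) * C1 * Aval P0 M := hlogA
        _ = Aval P0 M * ((ν:ℝ) * C1) := by ring
  -- final chain
  have hInt : T * U ≤ ∫ t in (-T)..T,
      ‖∑ n ∈ Finset.Icc 1 N, (n : ℂ) ^ (-(1 / 2 : ℂ) - Complex.I * t)‖ ^ (2 * ν) := by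
    have heq : ∫ t in (-T)..T,
        ‖∑ n ∈ Finset.Icc 1 N, (n : ℂ) ^ (-(1 / 2 : ℂ) - Complex.I * t)‖ ^ (2 * ν)
        = ∫ t in (-T)..T, g t := by
      simp_rw [hgeq]
    rw [heq]
    calc T * U = ∑ p ∈ E, (Wt p.1 * Wt p.2) *
          ∫ t in (-T)..T, (1 - |t|/T) * Real.cos ((Lt p.2 - Lt p.1) * t) := hstep4.symm
      _ ≤ ∑ p ∈ pi ×ˢ pi, (Wt p.1 * Wt p.2) *
          ∫ t in (-T)..T, (1 - |t|/T) * Real.cos ((Lt p.2 - Lt p.1) * t) := hstep3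
      _ = ∫ t in (-T)..T, (1 - |t|/T) * g t := hstep2.symm
      _ ≤ ∫ t in (-T)..T, g t := hstep1
  calc (1/4) * (((ν:ℝ) * C1) ^ r)⁻¹ * (Real.log N) ^ (ν^2)
      = (Real.log N / ((ν:ℝ) * C1)) ^ r * (1/2) * (1/2) := by
        have hex : ν^2 = r := by rw [hr]; ring
        rw [hex, div_pow, div_eq_mul_inv]
        ring
    _ ≤ Aval P0 M ^ r * (1/2) * (1/2) := by
        refine mul_le_mul_of_nonneg_right (mul_le_mul_of_nonneg_right hApow (by norm_num))
          (by norm_num)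
    _ ≤ U * (1/2) := mul_le_mul_of_nonneg_right hstep5 (by norm_num)
    _ = (1 / (2*T)) * (T * U) := by field_simp
    _ ≤ _ := by
        refine mul_le_mul_of_nonneg_left hInt ?_
        positivity
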